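/- For every real number L, twice the number of elements of E₁ of modulus L is at most the number of elements of E₀ of modulus 3L; that is, 2 · Set.ncard {λ ∈ E₁ : |λ| = L} ≤ Set.ncard {Λ ∈ E₀ : |Λ| = 3L} (both sets being finite). -/

import Mathlib

noncomputable def ω : ℂ := (1 + Real.sqrt 3 * Complex.I) / 2

noncomputable def φ : ℂ := -(1 + ω) / 3

noncomputable def E (j : ℕ) : Set ℂ := {z | ∃ n m : ℤ, z = (n : ℂ) + (m : ℂ) * ω + (j : ℂ) * φ}

lemma ω_re : ω.re = 1/2 := by simp [ω]
lemma ω_im : ω.im = Real.sqrt 3 / 2 := by simp [ω]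
lemma φ_im : φ.im = -(Real.sqrt 3 / 6) := by simp [φ, ω]; ring
lemma sqrt3_ge : (1:ℝ) ≤ Real.sqrt 3 := by
  rw [show (1:ℝ) = Real.sqrt 1 by simp]
  exact Real.sqrt_le_sqrt (by norm_num)

lemma finite_sphere (c : ℂ) (r : ℝ) :
    {z : ℂ | (∃ n m : ℤ, z = (n : ℂ) + (m : ℂ) * ω + c) ∧ ‖z‖ = r}.Finite := by
  set R : ℝ := r + ‖c‖ with hR
  set B : ℤ := ⌈2 * R⌉ with hB
  apply Set.Finite.subset (Set.Finite.image (fun p : ℤ × ℤ => (p.1 : ℂ) + (p.2 : ℂ) * ω + c)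
    ((Set.finite_Icc (-B) B).prod (Set.finite_Icc (-B) B)))
  rintro z ⟨⟨n, m, rfl⟩, habs⟩
  have hc : ‖(n : ℂ) + (m : ℂ) * ω‖ ≤ R := by
    calc ‖(n : ℂ) + (m : ℂ) * ω‖
        = ‖((n : ℂ) + (m : ℂ) * ω + c) + (-c)‖ := by ring_nf
      _ ≤ ‖(n : ℂ) + (m : ℂ) * ω + c‖ + ‖-c‖ := norm_add_le _ _
      _ = R := by rw [habs, norm_neg]
  have him_eq : ((n : ℂ) + (m : ℂ) * ω).im = m * (Real.sqrt 3 / 2) := by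
    simp [Complex.add_im, Complex.mul_im, ω_im]
  have hre_eq : ((n : ℂ) + (m : ℂ) * ω).re = n + m * (1/2) := by
    simp [Complex.add_re, Complex.mul_re, ω_re]
  have him : |(m : ℝ) * (Real.sqrt 3 / 2)| ≤ R := by
    rw [← him_eq]; exact le_trans (Complex.abs_im_le_norm _) hc
  have hre : |(n : ℝ) + m * (1/2)| ≤ R := by
    rw [← hre_eq]; exact le_trans (Complex.abs_re_le_norm _) hc
  have hm : |(m : ℝ)| ≤ 2 * R := by
    have h1 := sqrt3_ge
    have h2 : |(m : ℝ)| * |Real.sqrt 3 / 2| ≤ R := by rwa [abs_mul] at him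
    rw [abs_of_nonneg (by positivity : (0:ℝ) ≤ Real.sqrt 3 / 2)] at h2
    nlinarith [abs_nonneg (m : ℝ)]
  have hn : |(n : ℝ)| ≤ 2 * R := by
    have h3 : |(n : ℝ)| ≤ |(n:ℝ) + m * (1/2)| + |(m:ℝ) * (1/2)| := by
      calc |(n : ℝ)| = |((n:ℝ) + m * (1/2)) + (-((m:ℝ) * (1/2)))| := by ring_nf
        _ ≤ |(n:ℝ) + m * (1/2)| + |(-((m:ℝ) * (1/2)))| := abs_add_le _ _
        _ = |(n:ℝ) + m * (1/2)| + |(m:ℝ) * (1/2)| := by rw [abs_neg]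
    rw [abs_mul, show |(1/2:ℝ)| = 1/2 by norm_num] at h3
    linarith
  have hRB : 2 * R ≤ (B : ℝ) := Int.le_ceil _
  refine ⟨(n, m), ⟨?_, ?_⟩, rfl⟩
  · have : |(n : ℝ)| ≤ (B : ℝ) := le_trans hn hRB
    rw [← Int.cast_abs] at this
    have : |n| ≤ B := by exact_mod_cast this
    exact Set.mem_Icc.mpr (abs_le.mp this)
  · have : |(m : ℝ)| ≤ (B : ℝ) := le_trans hm hRB
    rw [← Int.cast_abs] at this
    have : |m| ≤ B := by exact_mod_cast this
    exact Set.mem_Icc.mpr (abs_le.mp this)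

theorem two_mul_ncard_le (L : ℝ) :
    2 * Set.ncard {z ∈ E 1 | ‖z‖ = L} ≤
      Set.ncard {z ∈ E 0 | ‖z‖ = 3 * L} := by
  set S1 : Set ℂ := {z ∈ E 1 | ‖z‖ = L} with hS1def
  set S0 : Set ℂ := {z ∈ E 0 | ‖z‖ = 3 * L} with hS0def
  have hS1fin : S1.Finite := finite_sphere (((1:ℕ) : ℂ) * φ) L
  have hS0fin : S0.Finite := finite_sphere (((0:ℕ) : ℂ) * φ) (3 * L)
  have hsq : (0:ℝ) < Real.sqrt 3 := lt_of_lt_of_le one_pos sqrt3_ge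
  -- images of S1 under z ↦ 3z and z ↦ -3z land in S0
  have hmapA : ∀ z ∈ S1, (3:ℂ) * z ∈ S0 := by
    rintro z ⟨⟨n, m, rfl⟩, habs⟩
    refine ⟨⟨3*n - 1, 3*m - 1, ?_⟩, ?_⟩
    · push_cast
      rw [φ]; ring
    · rw [norm_mul, habs]
      norm_num
  have hmapB : ∀ z ∈ S1, (-3:ℂ) * z ∈ S0 := by
    rintro z ⟨⟨n, m, rfl⟩, habs⟩
    refine ⟨⟨1 - 3*n, 1 - 3*m, ?_⟩, ?_⟩
    · push_cast
      rw [φ]; ring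
    · rw [norm_mul, habs]
      norm_num
  set A : Set ℂ := (fun z => (3:ℂ) * z) '' S1 with hA
  set Bs : Set ℂ := (fun z => (-3:ℂ) * z) '' S1 with hB
  have hsub : A ∪ Bs ⊆ S0 := by
    rintro x (⟨a, ha, rfl⟩ | ⟨a, ha, rfl⟩)
    · exact hmapA a ha
    · exact hmapB a ha
  have hdisj : Disjoint A Bs := by
    rw [Set.disjoint_left]
    rintro x ⟨a, ⟨⟨n, m, rfl⟩, _⟩, rfl⟩ ⟨b, ⟨⟨n', m', rfl⟩, _⟩, heq⟩
    simp only at heq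
    have h2 := congrArg Complex.im heq
    simp only [Complex.mul_im, Complex.add_im, Complex.add_re, Complex.mul_re,
      Complex.intCast_im, Complex.intCast_re, Complex.natCast_im, Complex.natCast_re,
      ω_im, ω_re, φ_im, Complex.neg_im, Complex.neg_re, Complex.re_ofNat, Complex.im_ofNat, Nat.cast_one, Complex.one_re, Complex.one_im] at h2
    have h3 : Real.sqrt 3 * ((3*(m:ℝ) + 3*(m':ℝ) - 2)) = 0 := by
      linear_combination (-2:ℝ) * h2
    have h4 : (3*(m:ℝ) + 3*(m':ℝ) - 2) = 0 := by
      rcases mul_eq_zero.mp h3 with h | h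
      · exact absurd h (ne_of_gt hsq)
      · exact h
    have h5 : (3*m + 3*m' - 2 : ℤ) = 0 := by exact_mod_cast h4
    omega
  calc 2 * S1.ncard = A.ncard + Bs.ncard := by
        rw [hA, hB, Set.ncard_image_of_injective _ (mul_right_injective₀ (by norm_num : (3:ℂ) ≠ 0)),
          Set.ncard_image_of_injective _ (mul_right_injective₀ (by norm_num : (-3:ℂ) ≠ 0))]
        ring
    _ = (A ∪ Bs).ncard := (Set.ncard_union_eq hdisj (hS1fin.image _) (hS1fin.image _)).symm
    _ ≤ S0.ncard := Set.ncard_le_ncard hsub hS0fin
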